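/- arXiv:1412.4248 — 3 statements merged into one kernel-verified Lean document; each statement's English description precedes it below -/
import Mathlib

section
/- Let α, β > 0 and let σ be any real 2×2 matrix satisfying σξ·ξ ≥ α|ξ|² and σ⁻¹ξ·ξ ≥ β⁻¹|ξ|² for all ξ ∈ ℝ². Define the complex numbers μ = (σ₂₂ − σ₁₁ − i(σ₁₂ + σ₂₁)) / (1 + Tr σ + det σ) and ν = (1 − det σ + i(σ₁₂ − σ₂₁)) / (1 + Tr σ + det σ). Then there exists a constant K ≥ 1, depending only on α and β, such that |μ| + |ν| ≤ (K − 1)/(K + 1). -/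
open Matrix Complex

/-- The first complex dilatation `μ` associated to the matrix `σ`. -/
noncomputable def muDil (σ : Matrix (Fin 2) (Fin 2) ℝ) : ℂ :=
  ((σ 1 1 : ℂ) - (σ 0 0 : ℂ) - Complex.I * ((σ 0 1 : ℂ) + (σ 1 0 : ℂ))) /
    (1 + (σ.trace : ℂ) + (σ.det : ℂ))

/-- The second complex dilatation `ν` associated to the matrix `σ`. -/
noncomputable def nuDil (σ : Matrix (Fin 2) (Fin 2) ℝ) : ℂ :=
  (1 - (σ.det : ℂ) + Complex.I * ((σ 0 1 : ℂ) - (σ 1 0 : ℂ))) /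
    (1 + (σ.trace : ℂ) + (σ.det : ℂ))

set_option maxHeartbeats 2000000 in
/-- For elliptic `σ` there is `K ≥ 1`, depending only on `α` and `β`, such that
`|μ| + |ν| ≤ (K-1)/(K+1)`. -/
theorem dilatations_elliptic_bound (α β : ℝ) (hα : 0 < α) (hβ : 0 < β) :
    ∃ K : ℝ, 1 ≤ K ∧
      ∀ σ : Matrix (Fin 2) (Fin 2) ℝ,
        (∀ ξ : Fin 2 → ℝ, α * (ξ ⬝ᵥ ξ) ≤ (σ *ᵥ ξ) ⬝ᵥ ξ) →
        (∀ ξ : Fin 2 → ℝ, β⁻¹ * (ξ ⬝ᵥ ξ) ≤ (σ⁻¹ *ᵥ ξ) ⬝ᵥ ξ) →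
        ‖muDil σ‖ + ‖nuDil σ‖ ≤ (K - 1) / (K + 1) := by
  set M : ℝ := 1 + 2*β + 2*β^2 with hM
  refine ⟨max 1 (M / α - 1), le_max_left _ _, ?_⟩
  intro σ h1 h2
  set K : ℝ := max 1 (M / α - 1) with hKdef
  set a : ℝ := σ 0 0 with ha'
  set b : ℝ := σ 0 1 with hb'
  set c : ℝ := σ 1 0 with hc'
  set d : ℝ := σ 1 1 with hd'
  have hdet2 : σ.det = a * d - b * c := by rw [Matrix.det_fin_two]
  -- scalar form of the first ellipticity condition
  have H1 : ∀ x y : ℝ, α * (x^2 + y^2) ≤ a * x^2 + (b + c) * (x*y) + d * y^2 := by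
    intro x y
    have := h1 ![x, y]
    simp [dotProduct, mulVec, Fin.sum_univ_two] at this
    nlinarith [this]
  have haα : α ≤ a := by nlinarith [H1 1 0]
  have hdα : α ≤ d := by nlinarith [H1 0 1]
  have hdisc : (b + c)^2 ≤ 4*(a - α)*(d - α) := by
    have h := discrim_le_zero (a := a - α) (b := b + c) (c := d - α) ?_
    · simp [discrim] at h; nlinarith [h]
    · intro x; nlinarith [H1 x 1]
  -- scalar form of the second ellipticity condition
  have H2 : ∀ x y : ℝ, β⁻¹ * (x^2 + y^2) ≤ (σ.det)⁻¹ * (d * x^2 - (b + c) * (x*y) + a * y^2) := by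
    intro x y
    have := h2 ![x, y]
    rw [Matrix.inv_def, Matrix.adjugate_fin_two] at this
    simp [dotProduct, mulVec, Fin.sum_univ_two, Ring.inverse_eq_inv'] at this
    nlinarith [this]
  -- positivity of the determinant
  have hβinv : (0:ℝ) < β⁻¹ := inv_pos.mpr hβ
  have hdet : (0:ℝ) < σ.det := by
    rcases lt_trichotomy σ.det 0 with h | h | h
    · have h10 := H2 1 0
      have hinv : (σ.det)⁻¹ < 0 := inv_lt_zero.mpr h
      nlinarith [h10]
    · have h10 := H2 1 0
      rw [h] at h10
      simp only [_root_.inv_zero] at h10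
      nlinarith [h10]
    · exact h
  have hsne : σ.det ≠ 0 := ne_of_gt hdet
  -- upper bounds from the second condition
  have hacβ : β⁻¹ * (a^2 + c^2) ≤ a := by
    have h := H2 a c
    have hexpr : d * a^2 - (b + c) * (a*c) + a * c^2 = σ.det * a := by
      rw [hdet2]; ring
    rw [hexpr, inv_mul_cancel_left₀ hsne] at h
    exact h
  have hbdβ : β⁻¹ * (b^2 + d^2) ≤ d := by
    have h := H2 b d
    have hexpr : d * b^2 - (b + c) * (b*d) + a * d^2 = σ.det * d := by
      rw [hdet2]; ring
    rw [hexpr, inv_mul_cancel_left₀ hsne] at h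
    exact h
  have hac' : a^2 + c^2 ≤ β * a := by
    have h := mul_le_mul_of_nonneg_left hacβ (le_of_lt hβ)
    rwa [← mul_assoc, mul_inv_cancel₀ (ne_of_gt hβ), one_mul] at h
  have hbd' : b^2 + d^2 ≤ β * d := by
    have h := mul_le_mul_of_nonneg_left hbdβ (le_of_lt hβ)
    rwa [← mul_assoc, mul_inv_cancel₀ (ne_of_gt hβ), one_mul] at h
  have haβ : a ≤ β := by nlinarith [hac', sq_nonneg c]
  have hdβ : d ≤ β := by nlinarith [hbd', sq_nonneg b]
  have hcβ : c^2 ≤ β^2 := by nlinarith [hac', sq_nonneg a, mul_le_mul_of_nonneg_left haβ hβ.le]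
  have hbβ : b^2 ≤ β^2 := by nlinarith [hbd', sq_nonneg d, mul_le_mul_of_nonneg_left hdβ hβ.le]
  set s : ℝ := a * d - b * c with hs'
  have hspos : 0 < s := hdet2 ▸ hdet
  -- the denominator
  set D : ℝ := 1 + (a + d) + s with hD'
  have hDpos : 0 < D := by
    rw [hD']; nlinarith [hspos, haα, hdα]
  have hDM : D ≤ M := by
    rw [hD', hs', hM]
    nlinarith [hbβ, hcβ, haβ, hdβ, sq_nonneg (b + c), haα, hdα]
  -- absolute values
  have habsden : ‖(1 + (σ.trace : ℂ) + (σ.det : ℂ))‖ = D := by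
    have : (1 + (σ.trace : ℂ) + (σ.det : ℂ)) = ((D : ℝ) : ℂ) := by
      rw [Matrix.trace_fin_two σ, hdet2, hD', hs']; push_cast; ring
    rw [this, Complex.norm_real, Real.norm_eq_abs, abs_of_pos hDpos]
  have habsmu : ‖muDil σ‖ = Real.sqrt ((d - a)^2 + (b + c)^2) / D := by
    unfold muDil
    rw [norm_div, habsden]
    congr 1
    have : ((σ 1 1 : ℂ) - σ 0 0 - Complex.I * ((σ 0 1 : ℂ) + σ 1 0))
        = ((d - a : ℝ) : ℂ) + ((-(b + c) : ℝ) : ℂ) * Complex.I := by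
      rw [ha', hb', hc', hd']; push_cast; ring
    rw [this, Complex.norm_add_mul_I]
    ring_nf
  have habsnu : ‖nuDil σ‖ = Real.sqrt ((1 - s)^2 + (b - c)^2) / D := by
    unfold nuDil
    rw [norm_div, habsden]
    congr 1
    have : ((1 : ℂ) - (σ.det : ℂ) + Complex.I * ((σ 0 1 : ℂ) - σ 1 0))
        = ((1 - s : ℝ) : ℂ) + ((b - c : ℝ) : ℂ) * Complex.I := by
      rw [hb', hc', hdet2, hs']; push_cast; ring
    rw [this, Complex.norm_add_mul_I]
  -- bounds on the numerators
  have hP : Real.sqrt ((d - a)^2 + (b + c)^2) ≤ a + d - 2*α := by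
    have h1' : (d - a)^2 + (b + c)^2 ≤ (a + d - 2*α)^2 := by nlinarith [hdisc]
    calc Real.sqrt ((d - a)^2 + (b + c)^2) ≤ Real.sqrt ((a + d - 2*α)^2) :=
          Real.sqrt_le_sqrt h1'
      _ = a + d - 2*α := Real.sqrt_sq (by linarith)
  have hN : Real.sqrt ((1 - s)^2 + (b - c)^2) ≤ 1 + s := by
    have hbc4s : (b - c)^2 ≤ 4*s := by
      rw [hs']; nlinarith [hdisc, haα, hdα, hα]
    have h1' : (1 - s)^2 + (b - c)^2 ≤ (1 + s)^2 := by nlinarith [hbc4s]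
    calc Real.sqrt ((1 - s)^2 + (b - c)^2) ≤ Real.sqrt ((1 + s)^2) :=
          Real.sqrt_le_sqrt h1'
      _ = 1 + s := Real.sqrt_sq (by linarith)
  -- combine
  have hK1 : (1:ℝ) ≤ K := le_max_left _ _
  have hKpos : (0:ℝ) < K + 1 := by linarith
  have hMK : M ≤ α * (K + 1) := by
    have h0 : M / α - 1 ≤ K := le_max_right _ _
    have h2' : M / α ≤ K + 1 := by linarith
    calc M = α * (M / α) := by field_simp
      _ ≤ α * (K + 1) := by nlinarith [h2']
  rw [habsmu, habsnu, ← add_div, div_le_div_iff₀ hDpos hKpos]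
  have hmain : Real.sqrt ((d - a)^2 + (b + c)^2) + Real.sqrt ((1 - s)^2 + (b - c)^2)
      ≤ D - 2*α := by
    rw [hD']; linarith [hP, hN]
  have step1 := mul_le_mul_of_nonneg_right hmain (le_of_lt hKpos)
  nlinarith [step1, hMK, hDM]
end

section
/- Let Ω ⊂ ℝ² be open and simply connected, let σ ∈ M(α,β,Ω) be a C¹ symmetric matrix-valued map with det σ(x) = 1 for all x ∈ Ω, and let u ∈ C²(Ω) satisfy div(σ∇u) = 0 classically in Ω. Let ũ ∈ C¹(Ω) be the stream function of u, i.e. ∇ũ = Jσ∇u. Then ũ also satisfies div(σ∇ũ) = 0 in Ω; hence U = (u, ũ) is a σ-harmonic mapping. -/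
open Matrix

/-- Gradient of a scalar function on `ℝ²` (realized as `Fin 2 → ℝ`). -/
noncomputable def grad (f : (Fin 2 → ℝ) → ℝ) (x : Fin 2 → ℝ) : Fin 2 → ℝ :=
  fun i => fderiv ℝ f x (Pi.single i 1)

/-- Divergence of a planar vector field. -/
noncomputable def div2 (V : (Fin 2 → ℝ) → (Fin 2 → ℝ)) (x : Fin 2 → ℝ) : ℝ :=
  ∑ i, fderiv ℝ (fun y => V y i) x (Pi.single i 1)

/-- The counterclockwise rotation by 90 degrees. -/
def Jmat : Matrix (Fin 2) (Fin 2) ℝ := !![0, -1; 1, 0]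

/-- The class `M(α,β,Ω)` (pointwise version, suited to continuous `σ`). -/
def InMClass (α β : ℝ) (Ω : Set (Fin 2 → ℝ))
    (σ : (Fin 2 → ℝ) → Matrix (Fin 2) (Fin 2) ℝ) : Prop :=
  ∀ x ∈ Ω, (∀ ξ : Fin 2 → ℝ, α * (ξ ⬝ᵥ ξ) ≤ (σ x *ᵥ ξ) ⬝ᵥ ξ) ∧
    (∀ ξ : Fin 2 → ℝ, β⁻¹ * (ξ ⬝ᵥ ξ) ≤ ((σ x)⁻¹ *ᵥ ξ) ⬝ᵥ ξ)

/-- Key algebraic identity: if `M` is symmetric with determinant `1`,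
then `M * J * M = J`. -/
lemma mul_Jmat_mul_self (M : Matrix (Fin 2) (Fin 2) ℝ) (hs : Mᵀ = M)
    (hd : M.det = 1) : M * Jmat * M = Jmat := by
  have hsym : M 1 0 = M 0 1 := by
    conv_lhs => rw [← hs]
    rfl
  have hdet : M 0 0 * M 1 1 - M 0 1 * M 1 0 = 1 := by
    rw [← Matrix.det_fin_two]; exact hd
  rw [hsym] at hdet
  ext i j
  fin_cases i <;> fin_cases j <;>
    simp [Jmat, Matrix.mul_apply, Fin.sum_univ_two, hsym] <;> linarith [hdet]

/-- Evaluation of the derivative of a `CLM`-valued map. -/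
lemma fderiv_clm_eval {g : (Fin 2 → ℝ) → ((Fin 2 → ℝ) →L[ℝ] ℝ)} {x : Fin 2 → ℝ}
    (hg : DifferentiableAt ℝ g x) (w v : Fin 2 → ℝ) :
    fderiv ℝ (fun y => g y w) x v = fderiv ℝ g x v w := by
  have h := ((ContinuousLinearMap.apply ℝ ℝ w).hasFDerivAt.comp x
    hg.hasFDerivAt).fderiv
  have h2 : fderiv ℝ (fun y => g y w) x
      = (ContinuousLinearMap.apply ℝ ℝ w).comp (fderiv ℝ g x) := h
  rw [h2]; rfl

/-- If `σ` is symmetric with `det σ = 1`, then the stream function `ũ` of a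
`σ`-harmonic function `u` is itself `σ`-harmonic, so `U = (u, ũ)` is a
`σ`-harmonic mapping. -/
theorem stream_function_is_sigma_harmonic
    (α β : ℝ) (hα : 0 < α) (hβ : 0 < β)
    (Ω : Set (Fin 2 → ℝ)) (hΩ : IsOpen Ω) (hsc : SimplyConnectedSpace ↥Ω)
    (σ : (Fin 2 → ℝ) → Matrix (Fin 2) (Fin 2) ℝ)
    (hσC1 : ∀ i j, ContDiffOn ℝ 1 (fun x => σ x i j) Ω)
    (hσM : InMClass α β Ω σ)
    (hσsymm : ∀ x ∈ Ω, (σ x)ᵀ = σ x)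
    (hσdet : ∀ x ∈ Ω, (σ x).det = 1)
    (u : (Fin 2 → ℝ) → ℝ) (hu : ContDiffOn ℝ 2 u Ω)
    (hdiv : ∀ x ∈ Ω, div2 (fun y => σ y *ᵥ grad u y) x = 0)
    (v : (Fin 2 → ℝ) → ℝ) (hv : ContDiffOn ℝ 1 v Ω)
    (hstream : ∀ x ∈ Ω, grad v x = Jmat *ᵥ (σ x *ᵥ grad u x)) :
    ∀ x ∈ Ω, div2 (fun y => σ y *ᵥ grad v y) x = 0 := by
  intro x hx
  have hxnbd : Ω ∈ nhds x := hΩ.mem_nhds hx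
  -- pointwise identity: σ ∇v = J ∇u on Ω
  have heq : ∀ y ∈ Ω, σ y *ᵥ grad v y = Jmat *ᵥ grad u y := by
    intro y hy
    rw [hstream y hy, Matrix.mulVec_mulVec, Matrix.mulVec_mulVec,
      mul_Jmat_mul_self (σ y) (hσsymm y hy) (hσdet y hy)]
  -- replace the vector field by `J ∇u` in the divergence
  have hfd : ∀ i : Fin 2, fderiv ℝ (fun y => (σ y *ᵥ grad v y) i) x
      = fderiv ℝ (fun y => (Jmat *ᵥ grad u y) i) x := by
    intro i
    apply Filter.EventuallyEq.fderiv_eq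
    exact Filter.eventually_of_mem hxnbd fun y hy => congrFun (heq y hy) i
  have hcomp0 : (fun y => (Jmat *ᵥ grad u y) (0 : Fin 2))
      = fun y => -(fderiv ℝ u y (Pi.single 1 1)) := by
    funext y
    simp [Jmat, Matrix.mulVec, dotProduct, Fin.sum_univ_two, grad]
  have hcomp1 : (fun y => (Jmat *ᵥ grad u y) (1 : Fin 2))
      = fun y => fderiv ℝ u y (Pi.single 0 1) := by
    funext y
    simp [Jmat, Matrix.mulVec, dotProduct, Fin.sum_univ_two, grad]
  -- second derivative symmetry
  have hC2 : ContDiffAt ℝ 2 u x := hu.contDiffAt hxnbd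
  have hd2 : DifferentiableAt ℝ (fderiv ℝ u) x :=
    (hC2.fderiv_right (m := 1) le_rfl).differentiableAt one_ne_zero
  have hev : ∀ᶠ y in nhds x, HasFDerivAt u (fderiv ℝ u y) y := by
    refine Filter.eventually_of_mem hxnbd fun y hy => ?_
    exact ((hu.contDiffAt (hΩ.mem_nhds hy)).differentiableAt two_ne_zero).hasFDerivAt
  have hsym2 := second_derivative_symmetric_of_eventually hev hd2.hasFDerivAt
    (Pi.single (0 : Fin 2) (1 : ℝ)) (Pi.single 1 1)
  have e01 : fderiv ℝ (fun y => fderiv ℝ u y (Pi.single 1 1)) x (Pi.single 0 1)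
      = fderiv ℝ (fun y => fderiv ℝ u y (Pi.single 0 1)) x (Pi.single 1 1) := by
    rw [fderiv_clm_eval hd2, fderiv_clm_eval hd2]
    exact hsym2
  -- put everything together
  have : div2 (fun y => σ y *ᵥ grad v y) x
      = fderiv ℝ (fun y => -(fderiv ℝ u y (Pi.single 1 1))) x (Pi.single 0 1)
        + fderiv ℝ (fun y => fderiv ℝ u y (Pi.single 0 1)) x (Pi.single 1 1) := by
    rw [div2, Fin.sum_univ_two, hfd 0, hfd 1, hcomp0, hcomp1]
  rw [this, fderiv_fun_neg]
  simp only [ContinuousLinearMap.neg_apply]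
  rw [e01]
  ring
end

section
/- Consider the map U : ℂ → ℂ given (in complex notation) by U(z) = z + (1/2) z̄². Then U is injective on the closed unit disk B̄(0,1), its Jacobian determinant satisfies det DU(z) = 1 − |z|² for every z ∈ ℂ, so det DU > 0 in the open unit disk and det DU vanishes identically on the unit circle ∂B(0,1); consequently the dilatation d(U) = |DU|²/(2 det DU) tends to +∞ as z approaches any point of ∂B(0,1). -/
open Matrix Complex Filter

/-- The real `2×2` Jacobian matrix of a map `ℂ → ℂ`, viewed as a map of `ℝ²`. -/
noncomputable def JacC (U : ℂ → ℂ) (z : ℂ) : Matrix (Fin 2) (Fin 2) ℝ :=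
  !![fderiv ℝ (fun w => (U w).re) z 1, fderiv ℝ (fun w => (U w).re) z Complex.I;
     fderiv ℝ (fun w => (U w).im) z 1, fderiv ℝ (fun w => (U w).im) z Complex.I]

/-- The dilatation `d(U) = |DU|²/(2 det DU)` of a planar mapping. -/
noncomputable def dilat (U : ℂ → ℂ) (z : ℂ) : ℝ :=
  (JacC U z * (JacC U z)ᵀ).trace / (2 * (JacC U z).det)

/-- The real Fréchet derivative of `U(z) = z + z̄²/2` at `z`. -/
noncomputable def Lmap (z : ℂ) : ℂ →L[ℝ] ℂ :=
  ContinuousLinearMap.id ℝ ℂ + (starRingEnd ℂ z) • (Complex.conjCLE : ℂ →L[ℝ] ℂ)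

theorem hF (z : ℂ) :
    HasFDerivAt (fun w => w + (1/2 : ℂ) * (starRingEnd ℂ w)^2) (Lmap z) z := by
  have hconj : HasFDerivAt (fun w : ℂ => starRingEnd ℂ w) (Complex.conjCLE : ℂ →L[ℝ] ℂ) z :=
    Complex.conjCLE.hasFDerivAt
  have h2 : HasFDerivAt (fun w : ℂ => starRingEnd ℂ w * starRingEnd ℂ w)
      (starRingEnd ℂ z • (Complex.conjCLE : ℂ →L[ℝ] ℂ)
        + starRingEnd ℂ z • (Complex.conjCLE : ℂ →L[ℝ] ℂ)) z := hconj.mul hconj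
  have h3 := (hasFDerivAt_id z).add ((h2.const_mul (1/2 : ℂ)))
  convert h3 using 1
  · rfl
  · rfl
  · ext w; simp only [Pi.add_apply, id_eq]; ring
  · ext v
    simp [Lmap, smul_add]
    ring

theorem jac_eq (z : ℂ) : JacC (fun w => w + (1/2 : ℂ) * (starRingEnd ℂ w)^2) z
    = !![1 + z.re, -z.im; -z.im, 1 - z.re] := by
  have hre : HasFDerivAt (fun w => ((fun w => w + (1/2 : ℂ) * (starRingEnd ℂ w)^2) w).re)
      (Complex.reCLM.comp (Lmap z)) z := Complex.reCLM.hasFDerivAt.comp z (hF z)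
  have him : HasFDerivAt (fun w => ((fun w => w + (1/2 : ℂ) * (starRingEnd ℂ w)^2) w).im)
      (Complex.imCLM.comp (Lmap z)) z := Complex.imCLM.hasFDerivAt.comp z (hF z)
  rw [JacC, hre.fderiv, him.fderiv]
  congr 1 <;> simp [Lmap, Complex.ext_iff, sub_eq_add_neg]

theorem det_eq (z : ℂ) :
    (JacC (fun w => w + (1 / 2 : ℂ) * (starRingEnd ℂ w) ^ 2) z).det
      = 1 - ‖z‖ ^ 2 := by
  rw [jac_eq, Matrix.det_fin_two_of, Complex.sq_norm, Complex.normSq_apply]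
  ring

theorem dilat_eq (z : ℂ) :
    dilat (fun w => w + (1 / 2 : ℂ) * (starRingEnd ℂ w) ^ 2) z
      = (1 + ‖z‖ ^ 2) / (1 - ‖z‖ ^ 2) := by
  rw [dilat, det_eq, jac_eq]
  have htr : ((!![1 + z.re, -z.im; -z.im, 1 - z.re] : Matrix (Fin 2) (Fin 2) ℝ) *
      (!![1 + z.re, -z.im; -z.im, 1 - z.re])ᵀ).trace
      = 2 * (1 + ‖z‖ ^ 2) := by
    rw [show (!![1 + z.re, -z.im; -z.im, 1 - z.re] : Matrix (Fin 2) (Fin 2) ℝ)ᵀ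
        = !![1 + z.re, -z.im; -z.im, 1 - z.re] from by
      ext i j; fin_cases i <;> fin_cases j <;> simp]
    simp [Matrix.trace_fin_two, Matrix.mul_apply, Fin.sum_univ_two, Complex.sq_norm,
      Complex.normSq_apply]
    ring
  rw [htr, mul_div_mul_left _ _ (two_ne_zero (α := ℝ))]

/-- The harmonic homeomorphism `U(z) = z + z̄²/2` of the closed unit disk:
it is injective on the closed disk, its Jacobian determinant equals `1 - |z|²`,
hence is positive on the open disk and vanishes identically on the unit circle,
and its dilatation blows up at every boundary point. -/
theorem hypocycloid_example :
    Set.InjOn (fun z : ℂ => z + (1 / 2 : ℂ) * (starRingEnd ℂ z) ^ 2)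
      (Metric.closedBall (0 : ℂ) 1) ∧
    (∀ z : ℂ,
      (JacC (fun w => w + (1 / 2 : ℂ) * (starRingEnd ℂ w) ^ 2) z).det
        = 1 - ‖z‖ ^ 2) ∧
    (∀ z ∈ Metric.ball (0 : ℂ) 1,
      0 < (JacC (fun w => w + (1 / 2 : ℂ) * (starRingEnd ℂ w) ^ 2) z).det) ∧
    (∀ z ∈ Metric.sphere (0 : ℂ) 1,
      (JacC (fun w => w + (1 / 2 : ℂ) * (starRingEnd ℂ w) ^ 2) z).det = 0) ∧
    (∀ p ∈ Metric.sphere (0 : ℂ) 1,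
      Tendsto (dilat (fun w => w + (1 / 2 : ℂ) * (starRingEnd ℂ w) ^ 2))
        (nhdsWithin p (Metric.ball (0 : ℂ) 1)) atTop) := by
  refine ⟨?_, det_eq, ?_, ?_, ?_⟩
  · -- injectivity
    intro z hz w hw h
    simp only [Metric.mem_closedBall, dist_zero_right] at hz hw
    simp only at h
    by_cases hzw : ‖z + w‖ = 2
    · -- |z+w| = 2 forces z = w by the parallelogram law
      have h4 : Complex.normSq (z + w) = 4 := by
        rw [← Complex.sq_norm, hzw]; norm_num
      have hnz : Complex.normSq z ≤ 1 := by
        have := pow_le_pow_left₀ (norm_nonneg z) hz 2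
        simpa [Complex.sq_norm] using this
      have hnw : Complex.normSq w ≤ 1 := by
        have := pow_le_pow_left₀ (norm_nonneg w) hw 2
        simpa [Complex.sq_norm] using this
      have hpar : Complex.normSq (z - w) + Complex.normSq (z + w)
          = 2 * Complex.normSq z + 2 * Complex.normSq w := by
        simp [Complex.normSq_apply]; ring
      have h0 : Complex.normSq (z - w) ≤ 0 := by linarith
      have := Complex.normSq_nonneg (z - w)
      have : Complex.normSq (z - w) = 0 := le_antisymm h0 this
      exact sub_eq_zero.mp (Complex.normSq_eq_zero.mp this)
    · -- |z+w| < 2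
      have hlt : ‖z + w‖ < 2 := by
        have := norm_add_le z w
        have h2 : ‖z + w‖ ≤ 2 := by linarith
        exact lt_of_le_of_ne h2 hzw
      have hd : z - w = (1/2 : ℂ) * ((starRingEnd ℂ w) ^ 2 - (starRingEnd ℂ z) ^ 2) := by
        linear_combination h
      have hfac : (starRingEnd ℂ w) ^ 2 - (starRingEnd ℂ z) ^ 2
          = starRingEnd ℂ ((w - z) * (w + z)) := by
        rw [_root_.map_mul, map_sub, map_add]; ring
      have habs : ‖z - w‖
          = ‖z - w‖ * (‖z + w‖ / 2) := by
        conv_lhs => rw [hd, hfac]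
        rw [norm_mul, Complex.norm_conj, norm_mul,
          norm_sub_rev w z, show w + z = z + w by ring,
          show ‖(1/2 : ℂ)‖ = 1/2 from by norm_num]
        ring
      by_contra hne
      have hpos : 0 < ‖z - w‖ := by
        rw [norm_pos_iff]
        exact sub_ne_zero.mpr hne
      have : ‖z + w‖ / 2 < 1 := by linarith
      nlinarith
  · intro z hz
    rw [det_eq]
    simp only [Metric.mem_ball, dist_zero_right] at hz
    nlinarith [norm_nonneg z]
  · intro z hz
    rw [det_eq]
    simp only [Metric.mem_sphere, dist_zero_right] at hz
    rw [show ‖z‖ = 1 from by simpa [Complex.dist_eq] using hz]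
    ring
  · intro p hp
    simp only [Metric.mem_sphere, dist_zero_right] at hp
    have hp1 : ‖p‖ = 1 := by simpa [Complex.dist_eq] using hp
    have hnum : Tendsto (fun z : ℂ => 1 + ‖z‖ ^ 2)
        (nhdsWithin p (Metric.ball (0 : ℂ) 1)) (nhds 2) := by
      have : Continuous fun z : ℂ => 1 + ‖z‖ ^ 2 := by continuity
      have h := (this.tendsto p).mono_left (nhdsWithin_le_nhds (s := Metric.ball (0 : ℂ) 1))
      simpa [hp1, one_add_one_eq_two] using h
    have hden : Tendsto (fun z : ℂ => 1 - ‖z‖ ^ 2)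
        (nhdsWithin p (Metric.ball (0 : ℂ) 1)) (nhdsWithin 0 (Set.Ioi 0)) := by
      apply tendsto_nhdsWithin_of_tendsto_nhds_of_eventually_within
      · have : Continuous fun z : ℂ => 1 - ‖z‖ ^ 2 := by continuity
        have h := (this.tendsto p).mono_left (nhdsWithin_le_nhds (s := Metric.ball (0 : ℂ) 1))
        simpa [hp1] using h
      · filter_upwards [self_mem_nhdsWithin] with z hz
        simp only [Metric.mem_ball, dist_zero_right] at hz
        have : ‖z‖ ^ 2 < 1 := by nlinarith [norm_nonneg z]
        simpa using this
    have hinv : Tendsto (fun z : ℂ => (1 - ‖z‖ ^ 2)⁻¹)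
        (nhdsWithin p (Metric.ball (0 : ℂ) 1)) atTop :=
      tendsto_inv_nhdsGT_zero.comp (by simpa using hden)
    have := hnum.pos_mul_atTop (by norm_num) hinv
    refine this.congr fun z => ?_
    rw [dilat_eq, div_eq_mul_inv]
end
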